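/- arXiv:2512.07592 — 2 statements merged into one kernel-verified Lean document; each statement's English description precedes it below -/
import Mathlib

section
/- Let G=(V,E) be a finite simple connected graph with at least two vertices. Then T(G) = { x ∈ ℝ^V : there exists y ∈ ℝ^E with y_e ≥ 0 for every e ∈ E, y(δ(v)) ≤ x_v for every v ∈ V, and x_u + x_v − y_{uv} ≤ 1 for every edge uv ∈ E }. -/
open Finset
open scoped Classical

noncomputable section

variable {V : Type*} [Fintype V]

/-- A co-2-plex: a set of vertices inducing a subgraph of maximum degree at most 1. -/
def IsCo2Plex {α : Type*} (G : SimpleGraph α) (S : Finset α) : Prop :=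
  ∀ u ∈ S, (S.filter fun v => G.Adj u v).card ≤ 1

/-- Incidence vector of a vertex set. -/
def chiV {α : Type*} (S : Finset α) : α → ℝ := fun v => if v ∈ S then 1 else 0

/-- Incidence vector (on edges) of the set of edges with both endpoints in `S`. -/
def chiE {α : Type*} (G : SimpleGraph α) (S : Finset α) : G.edgeSet → ℝ :=
  fun e => if ∀ v ∈ (e : Sym2 α), v ∈ S then 1 else 0

/-- The co-2-plex polytope. -/
def co2PlexPolytope (G : SimpleGraph V) : Set (V → ℝ) :=
  convexHull ℝ {x | ∃ S : Finset V, IsCo2Plex G S ∧ x = chiV S}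

/-- The extended co-2-plex polytope. -/
def co2PlexPolytopeExt (G : SimpleGraph V) : Set ((V → ℝ) × (G.edgeSet → ℝ)) :=
  convexHull ℝ {p | ∃ S : Finset V, IsCo2Plex G S ∧ p = (chiV S, chiE G S)}

/-- δ(v): edges incident to `v`. -/
def inc (G : SimpleGraph V) (v : V) : Finset G.edgeSet :=
  univ.filter fun e => v ∈ (e : Sym2 V)

/-- E(W): edges with both endpoints in W. -/
def edgesIn (G : SimpleGraph V) (W : Finset V) : Finset G.edgeSet :=
  univ.filter fun e => ∀ v ∈ (e : Sym2 V), v ∈ W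

/-- E(V \ W): edges with both endpoints outside W. -/
def edgesOut (G : SimpleGraph V) (W : Finset V) : Finset G.edgeSet :=
  univ.filter fun e => ∀ v ∈ (e : Sym2 V), v ∉ W

/-- δ(W): edges with exactly one endpoint in W. -/
def edgesCut (G : SimpleGraph V) (W : Finset V) : Finset G.edgeSet :=
  univ.filter fun e => (∃ v ∈ (e : Sym2 V), v ∈ W) ∧ ∃ v ∈ (e : Sym2 V), v ∉ W

/-- The utter graph of `G`. -/
def utter (G : SimpleGraph V) : SimpleGraph (V ⊕ G.edgeSet) where
  Adj a b :=
    match a, b with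
    | Sum.inl u, Sum.inl v => G.Adj u v
    | Sum.inl w, Sum.inr e => w ∈ (e : Sym2 V) ∨ ∃ z ∈ (e : Sym2 V), G.Adj w z
    | Sum.inr e, Sum.inl w => w ∈ (e : Sym2 V) ∨ ∃ z ∈ (e : Sym2 V), G.Adj w z
    | Sum.inr e, Sum.inr f =>
        e ≠ f ∧ ((∃ v, v ∈ (e : Sym2 V) ∧ v ∈ (f : Sym2 V)) ∨
          ∃ a ∈ (e : Sym2 V), ∃ b ∈ (f : Sym2 V), G.Adj a b)
  symm := by
    refine ⟨?_⟩
    rintro (u | e) (v | f) h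
    · exact h.symm
    · exact h
    · exact h
    · obtain ⟨hne, h⟩ := h
      refine ⟨hne.symm, ?_⟩
      rcases h with ⟨v, hv1, hv2⟩ | ⟨a, ha, b, hb, hab⟩
      · exact Or.inl ⟨v, hv2, hv1⟩
      · exact Or.inr ⟨b, hb, a, ha, hab.symm⟩
  loopless := by
    refine ⟨?_⟩
    rintro (u | e) h
    · exact G.loopless.irrefl u h
    · exact h.1 rfl

/-- An utter clique: a pair [W, F] whose union is a clique of the utter graph. -/
def IsUtterClique (G : SimpleGraph V) (W : Finset V) (F : Finset G.edgeSet) : Prop :=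
  (utter G).IsClique (Sum.inl '' (W : Set V) ∪ Sum.inr '' (F : Set G.edgeSet))

/-- A maximal utter clique. -/
def IsMaxUtterClique (G : SimpleGraph V) (W : Finset V) (F : Finset G.edgeSet) : Prop :=
  IsUtterClique G W F ∧
    (∀ v ∉ W, ¬ IsUtterClique G (insert v W) F) ∧
    (∀ e ∉ F, ¬ IsUtterClique G W (insert e F))

/-- The contraction G/F: vertices are the connected components of the spanning
subgraph (V, F); two components are adjacent iff some edge of `G` joins them. -/
def contract {α : Type*} (G : SimpleGraph α) (F : Set (Sym2 α)) :
    SimpleGraph (SimpleGraph.fromEdgeSet F).ConnectedComponent where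
  Adj c d := c ≠ d ∧ ∃ u v, G.Adj u v ∧
      (SimpleGraph.fromEdgeSet F).connectedComponentMk u = c ∧
      (SimpleGraph.fromEdgeSet F).connectedComponentMk v = d
  symm := by
    refine ⟨?_⟩
    rintro c d ⟨hne, u, v, h, hu, hv⟩
    exact ⟨hne.symm, v, u, h.symm, hv, hu⟩
  loopless := by
    refine ⟨?_⟩
    rintro c ⟨hne, _⟩
    exact hne rfl

/-- A graph is perfect if every induced subgraph has chromatic number equal to
its clique number. -/
def IsPerfect {α : Type*} (G : SimpleGraph α) : Prop :=
  ∀ s : Set α, (G.induce s).chromaticNumber = ((G.induce s).cliqueNum : ℕ∞)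

/-- A graph is contraction perfect if all its contractions (by edge subsets) are perfect. -/
def ContractionPerfect (G : SimpleGraph V) : Prop :=
  ∀ F : Set (Sym2 V), F ⊆ G.edgeSet → IsPerfect (contract G F)

/-- Chordal: no induced cycle of length at least 4. -/
def Chordal (G : SimpleGraph V) : Prop :=
  ∀ n, 4 ≤ n → IsEmpty (SimpleGraph.cycleGraph n ↪g G)

/-- Maximal clique (as a finset). -/
def IsMaxCliqueF (G : SimpleGraph V) (K : Finset V) : Prop :=
  G.IsClique (K : Set V) ∧ ∀ K' : Finset V, G.IsClique (K' : Set V) → K ⊆ K' → K = K'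

/-- A 2-plex: every vertex of the induced subgraph has degree at least |K| - 2 in it. -/
def Is2Plex (G : SimpleGraph V) (K : Finset V) : Prop :=
  ∀ v ∈ K, K.card - 2 ≤ (K.filter fun u => G.Adj v u).card

/-- α₂(G[W]): the maximum cardinality of a co-2-plex contained in `W`. -/
def co2plexNumOn (G : SimpleGraph V) (W : Finset V) : ℕ :=
  Finset.univ.sup fun S : Finset V => if S ⊆ W ∧ IsCo2Plex G S then S.card else 0

/-- Facet-defining inequality of a full-dimensional polytope in ℝ^α: a valid
inequality whose tight points contain `card α` affinely independent points. -/
def IsFacet {α : Type*} [Fintype α] (P : Set (α → ℝ)) (a : α → ℝ) (c : ℝ) : Prop :=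
  (∀ x ∈ P, ∑ v, a v * x v ≤ c) ∧
  ∃ f : Fin (Fintype.card α) → (α → ℝ),
    AffineIndependent ℝ f ∧ ∀ i, f i ∈ P ∧ ∑ v, a v * f i v = c

/-- The polytope T(G) given by bounds and the star inequalities. -/
def TPoly (G : SimpleGraph V) [DecidableRel G.Adj] : Set (V → ℝ) :=
  {x | (∀ v, 0 ≤ x v ∧ x v ≤ 1) ∧
    ∀ (w : V), ∀ W ⊆ G.neighborFinset w,
      ∑ v ∈ W, x v + ((W.card : ℝ) - 1) * x w ≤ (W.card : ℝ)}

/-- Total dual integrality of the system `A x ≤ b`. -/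
def IsTDI {ι κ : Type*} [Fintype ι] [Fintype κ] (A : ι → κ → ℝ) (b : ι → ℝ) : Prop :=
  ∀ c : κ → ℤ, ∀ m : ℝ,
    IsGreatest {t | ∃ x : κ → ℝ, (∀ i, ∑ j, A i j * x j ≤ b i) ∧ t = ∑ j, (c j : ℝ) * x j} m →
    ∃ π : ι → ℤ, (∀ i, 0 ≤ π i) ∧ (∀ j, ∑ i, (π i : ℝ) * A i j = (c j : ℝ)) ∧
      ∑ i, (π i : ℝ) * b i = m


lemma inc_sum (G : SimpleGraph V) [DecidableRel G.Adj] (w : V) (f : Sym2 V → ℝ) :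
    ∑ e ∈ inc G w, f (e : Sym2 V) = ∑ v ∈ G.neighborFinset w, f s(w, v) := by
  apply Finset.sum_bij (i := fun (e : G.edgeSet) (he : e ∈ inc G w) =>
    Sym2.Mem.other (by simpa [inc] using he : w ∈ (e : Sym2 V)))
  · intro e he
    have hw : w ∈ (e : Sym2 V) := by simpa [inc] using he
    rw [SimpleGraph.mem_neighborFinset, ← SimpleGraph.mem_edgeSet]
    rw [Sym2.other_spec hw]
    exact e.2
  · intro e1 h1 e2 h2 heq
    have hw1 : w ∈ (e1 : Sym2 V) := by simpa [inc] using h1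
    have hw2 : w ∈ (e2 : Sym2 V) := by simpa [inc] using h2
    apply Subtype.ext
    rw [← Sym2.other_spec hw1, ← Sym2.other_spec hw2, heq]
  · intro v hv
    have hadj : G.Adj w v := by simpa using hv
    refine ⟨⟨s(w, v), hadj⟩, ?_, ?_⟩
    · simp [inc]
    · have hw : w ∈ (⟨s(w,v), hadj⟩ : G.edgeSet).val := Sym2.mem_mk_left w v
      have := Sym2.other_spec hw
      exact Sym2.congr_right.mp this
  · intro e he
    have hw : w ∈ (e : Sym2 V) := by simpa [inc] using he
    rw [Sym2.other_spec hw]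

/-- T(G) is the projection onto the x-space of the system
y ≥ 0, y(δ(v)) ≤ x_v, and x_u + x_v − y_{uv} ≤ 1. -/
theorem stmt10 (G : SimpleGraph V) [DecidableRel G.Adj] (hconn : G.Connected)
    (hcard : 1 < Fintype.card V) :
    TPoly G = {x : V → ℝ | ∃ y : G.edgeSet → ℝ,
      (∀ e : G.edgeSet, 0 ≤ y e) ∧
      (∀ v : V, ∑ e ∈ inc G v, y e ≤ x v) ∧
      (∀ (u v : V) (h : G.Adj u v),
        x u + x v - y ⟨s(u, v), G.mem_edgeSet.mpr h⟩ ≤ 1)} := by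
  rw [TPoly]
  ext x
  simp only [Set.mem_setOf_eq]
  constructor
  · rintro ⟨hbound, hstar⟩
    set f : Sym2 V → ℝ := Sym2.lift ⟨fun a b => x a + x b - 1, fun a b => by ring⟩ with hf
    refine ⟨fun e => max (f (e : Sym2 V)) 0, fun e => le_max_right _ _, ?_, ?_⟩
    · intro v
      rw [inc_sum G v (fun z => max (f z) 0)]
      set W := (G.neighborFinset v).filter (fun u => 0 < f s(v, u)) with hW
      have hsplit : ∑ u ∈ G.neighborFinset v, max (f s(v, u)) 0
          = ∑ u ∈ W, f s(v, u) := by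
        rw [← Finset.sum_filter_add_sum_filter_not (G.neighborFinset v)
          (fun u => 0 < f s(v, u)) (fun u => max (f s(v, u)) 0)]
        have h1 : ∑ u ∈ W, max (f s(v, u)) 0 = ∑ u ∈ W, f s(v, u) := by
          apply Finset.sum_congr rfl
          intro u hu
          rw [hW, Finset.mem_filter] at hu
          exact max_eq_left hu.2.le
        have h2 : ∑ u ∈ (G.neighborFinset v).filter (fun u => ¬ 0 < f s(v, u)),
            max (f s(v, u)) 0 = 0 := by
          apply Finset.sum_eq_zero
          intro u hu
          rw [Finset.mem_filter] at hu
          exact max_eq_right (not_lt.mp hu.2)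
        rw [h1, h2, add_zero]
      rw [hsplit]
      have hsub : W ⊆ G.neighborFinset v := Finset.filter_subset _ _
      have hs := hstar v W hsub
      have hexp : ∑ u ∈ W, f s(v, u) = ∑ u ∈ W, x u + (W.card : ℝ) * x v - W.card := by
        simp only [hf, Sym2.lift_mk]
        rw [Finset.sum_sub_distrib, Finset.sum_add_distrib, Finset.sum_const,
          Finset.sum_const, nsmul_eq_mul, nsmul_eq_mul, mul_one]
        ring
      rw [hexp]
      linarith
    · intro u v h
      have : f s(u, v) = x u + x v - 1 := by simp [hf]
      have h2 : f s(u,v) ≤ max (f s(u, v)) 0 := le_max_left _ _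
      simp only [this] at h2 ⊢
      linarith [h2]
  · rintro ⟨y, hy0, hyv, hye⟩
    set Y : Sym2 V → ℝ := fun z => if h : z ∈ G.edgeSet then y ⟨z, h⟩ else 0 with hY
    have hY0 : ∀ z, 0 ≤ Y z := by
      intro z; rw [hY]; dsimp only; split
      · exact hy0 _
      · exact le_refl 0
    have hYe : ∀ (e : G.edgeSet), Y (e : Sym2 V) = y e := by
      intro e; rw [hY]; dsimp only; rw [dif_pos e.2]
    constructor
    · intro v
      constructor
      · exact le_trans (Finset.sum_nonneg fun e _ => hy0 e) (hyv v)
      · obtain ⟨w, hw⟩ := Fintype.exists_ne_of_one_lt_card hcard v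
        obtain ⟨p⟩ := hconn.preconnected v w
        obtain ⟨u, hu⟩ : ∃ u, G.Adj v u := by
          cases p with
          | nil => exact absurd rfl hw
          | cons h _ => exact ⟨_, h⟩
        have h1 := hye v u hu
        have h2 : y ⟨s(v, u), G.mem_edgeSet.mpr hu⟩ ≤ x u := by
          refine le_trans ?_ (hyv u)
          apply Finset.single_le_sum (f := y) (fun e _ => hy0 e)
          simp [inc]
        linarith
    · intro w W hW
      have key : ∀ v ∈ W, x v + x w - Y s(w, v) ≤ 1 := by
        intro v hv
        have hadj : G.Adj w v := by
          have := hW hv; simpa using this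
        have := hye w v hadj
        have hYs : Y s(w, v) = y ⟨s(w, v), G.mem_edgeSet.mpr hadj⟩ := by
          rw [hY]; dsimp only; rw [dif_pos]
        rw [hYs]; linarith
      have hsum : ∑ v ∈ W, (x v + x w - Y s(w, v)) ≤ (W.card : ℝ) := by
        calc ∑ v ∈ W, (x v + x w - Y s(w, v)) ≤ ∑ v ∈ W, (1 : ℝ) :=
          Finset.sum_le_sum key
        _ = W.card := by simp
      have hYle : ∑ v ∈ W, Y s(w, v) ≤ x w := by
        calc ∑ v ∈ W, Y s(w, v) ≤ ∑ v ∈ G.neighborFinset w, Y s(w, v) :=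
              Finset.sum_le_sum_of_subset_of_nonneg hW (fun v _ _ => hY0 _)
          _ = ∑ e ∈ inc G w, Y (e : Sym2 V) := (inc_sum G w Y).symm
          _ = ∑ e ∈ inc G w, y e := Finset.sum_congr rfl fun e _ => hYe e
          _ ≤ x w := hyv w
      have hexp : ∑ v ∈ W, (x v + x w - Y s(w, v))
          = ∑ v ∈ W, x v + (W.card : ℝ) * x w - ∑ v ∈ W, Y s(w, v) := by
        rw [Finset.sum_sub_distrib, Finset.sum_add_distrib, Finset.sum_const, nsmul_eq_mul]
      rw [hexp] at hsum
      linarith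


end
end

section
/- Let G=(V,E) be a finite simple graph and let u, v be two distinct vertices with uv ∉ E and N_G(u) = N_G(v) (false twins). Let G' be the graph obtained from G by adding the edge uv. Then a set S ⊆ V is a co-2-plex of G' if and only if it is a co-2-plex of G. -/
open Finset
open scoped Classical

noncomputable section

variable {V : Type*} [Fintype V]

lemma aux_twin {α : Type*} (G : SimpleGraph α) (u v : α) (hne : u ≠ v)
    (htwin : G.neighborSet u = G.neighborSet v)
    (S : Finset α) (h : IsCo2Plex G S) (hu : u ∈ S) :
    (S.filter fun x => (G ⊔ SimpleGraph.fromEdgeSet {s(u, v)}).Adj u x).card ≤ 1 := by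
  classical
  by_cases hvS : v ∈ S
  · have hemp : S.filter (fun x => G.Adj u x) = ∅ := by
      by_contra hne'
      obtain ⟨x, hx⟩ := Finset.nonempty_iff_ne_empty.2 hne'
      simp only [Finset.mem_filter] at hx
      obtain ⟨hxS, hux⟩ := hx
      have hvx : G.Adj v x := (Set.ext_iff.1 htwin x).1 hux
      have h2 : ({u, v} : Finset α) ⊆ S.filter (fun y => G.Adj x y) := by
        intro y hy
        simp only [Finset.mem_insert, Finset.mem_singleton] at hy
        rcases hy with rfl | rfl
        · exact Finset.mem_filter.2 ⟨hu, hux.symm⟩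
        · exact Finset.mem_filter.2 ⟨hvS, hvx.symm⟩
      have hcard : 2 ≤ (S.filter (fun y => G.Adj x y)).card := by
        calc 2 = ({u, v} : Finset α).card := by
                rw [Finset.card_insert_of_notMem (by simpa using hne),
                  Finset.card_singleton]
          _ ≤ _ := Finset.card_le_card h2
      exact absurd (h x hxS) (by omega)
    have hsub : (S.filter fun x => (G ⊔ SimpleGraph.fromEdgeSet {s(u, v)}).Adj u x)
        ⊆ {v} := by
      intro x hx
      simp only [Finset.mem_filter, SimpleGraph.sup_adj,
        SimpleGraph.fromEdgeSet_adj, Set.mem_singleton_iff] at hx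
      obtain ⟨hxS, hadj⟩ := hx
      rcases hadj with hadj | ⟨heq, hnex⟩
      · exact absurd (Finset.mem_filter.2 ⟨hxS, hadj⟩) (by simp [hemp])
      · rw [Sym2.eq_iff] at heq
        rcases heq with ⟨_, rfl⟩ | ⟨rfl, rfl⟩
        · simp
        · exact absurd rfl hne
    exact le_trans (Finset.card_le_card hsub) (by simp)
  · have hsub : (S.filter fun x => (G ⊔ SimpleGraph.fromEdgeSet {s(u, v)}).Adj u x)
        ⊆ S.filter fun x => G.Adj u x := by
      intro x hx
      simp only [Finset.mem_filter, SimpleGraph.sup_adj,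
        SimpleGraph.fromEdgeSet_adj, Set.mem_singleton_iff] at hx ⊢
      obtain ⟨hxS, hadj⟩ := hx
      refine ⟨hxS, ?_⟩
      rcases hadj with hadj | ⟨heq, hnex⟩
      · exact hadj
      · rw [Sym2.eq_iff] at heq
        rcases heq with ⟨_, rfl⟩ | ⟨rfl, rfl⟩
        · exact absurd hxS hvS
        · exact absurd rfl hne
    exact le_trans (Finset.card_le_card hsub) (h u hu)

/-- Adding an edge between two false twins does not change the
set of co-2-plexes. -/
theorem stmt12 {α : Type*} (G : SimpleGraph α) (u v : α) (hne : u ≠ v)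
    (hadj : ¬ G.Adj u v) (htwin : G.neighborSet u = G.neighborSet v)
    (S : Finset α) :
    IsCo2Plex (G ⊔ SimpleGraph.fromEdgeSet {s(u, v)}) S ↔ IsCo2Plex G S := by
  classical
  constructor
  · intro h w hw
    refine le_trans (Finset.card_le_card ?_) (h w hw)
    intro x hx
    simp only [Finset.mem_filter, SimpleGraph.sup_adj] at hx ⊢
    exact ⟨hx.1, Or.inl hx.2⟩
  · intro h w hw
    by_cases hwu : w = u
    · subst hwu
      convert aux_twin G w v hne htwin S h hw using 2
      congr!
    by_cases hwv : w = v
    · subst hwv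
      have hswap : s(u, w) = s(w, u) := Sym2.eq_swap
      have := aux_twin G w u (Ne.symm hne) htwin.symm S h hw
      rw [← hswap] at this
      convert this using 2
      congr!
    · have heq : (S.filter fun x => (G ⊔ SimpleGraph.fromEdgeSet {s(u, v)}).Adj w x)
          = S.filter fun x => G.Adj w x := by
        apply Finset.filter_congr
        intro x hxS
        simp only [SimpleGraph.sup_adj, SimpleGraph.fromEdgeSet_adj,
          Set.mem_singleton_iff, Sym2.eq_iff]
        constructor
        · rintro (hadj | ⟨⟨rfl, rfl⟩ | ⟨rfl, rfl⟩, _⟩)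
          · exact hadj
          · exact absurd rfl hwu
          · exact absurd rfl hwv
        · exact Or.inl
      have h1 : (S.filter fun x => G.Adj w x).card ≤ 1 := h w hw
      refine le_trans (le_of_eq ?_) h1
      rw [← heq]
      congr!

end
end
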